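/- Let X be a finite feature set partitioned into groups via a map grp : X → G, d(g) a distribution over {x : grp(x) = g} for each g, τ : X → ℝ≥0, b : G → ℝ. For any policy μ : X → [0,1] (which may depend on all features except explicit group status but where features determine group), there exists a group-based policy ν : G → [0,1] such that for all pairs g ≠ g' with b(g) > b(g'), out_ν(g) − out_ν(g') ≤ out_μ(g) − out_μ(g'), where out_π(g) = b(g) + ∑_{x : grp(x)=g} π(x)·τ(x)·d(g)(x) for feature policies and out_ν(g) = b(g) + ν(g)·∑_{x : grp(x)=g} τ(x)·d(g)(x) for group policies. (Take ν(g) = (∑_x μ(x)τ(x)d(g)(x)) / (∑_x τ(x)d(g)(x)) when the denominator is positive, ν(g) arbitrary otherwise.) -/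
import Mathlib


open Finset

/-- Proposition 6 (formalized): any feature-based policy `μ : X → [0,1]` can be
matched (or improved) pairwise by a group-based randomized policy `ν : G → [0,1]`. -/
theorem group_policy_no_worse_than_feature_policy
    {X G : Type*} [Fintype X] [Fintype G] [DecidableEq G]
    (grp : X → G)
    (d : G → X → ℝ) (hd0 : ∀ g x, 0 ≤ d g x)
    (hdsupp : ∀ g x, grp x ≠ g → d g x = 0)
    (hd1 : ∀ g, ∑ x ∈ univ.filter (fun x => grp x = g), d g x = 1)
    (τ : X → ℝ) (hτ : ∀ x, 0 ≤ τ x)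
    (b : G → ℝ)
    (μ : X → ℝ) (hμ : ∀ x, 0 ≤ μ x ∧ μ x ≤ 1) :
    ∃ ν : G → ℝ, (∀ g, 0 ≤ ν g ∧ ν g ≤ 1) ∧
      ∀ g g' : G, g ≠ g' → b g > b g' →
        (b g + ν g * ∑ x ∈ univ.filter (fun x => grp x = g), τ x * d g x) -
          (b g' + ν g' * ∑ x ∈ univ.filter (fun x => grp x = g'), τ x * d g' x) ≤
        (b g + ∑ x ∈ univ.filter (fun x => grp x = g), μ x * τ x * d g x) -
          (b g' + ∑ x ∈ univ.filter (fun x => grp x = g'), μ x * τ x * d g' x) := by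
  set S : G → ℝ := fun g => ∑ x ∈ univ.filter (fun x => grp x = g), τ x * d g x with hS
  set N : G → ℝ := fun g => ∑ x ∈ univ.filter (fun x => grp x = g), μ x * τ x * d g x with hN
  have hS0 : ∀ g, 0 ≤ S g := fun g =>
    Finset.sum_nonneg fun x _ => mul_nonneg (hτ x) (hd0 g x)
  have hN0 : ∀ g, 0 ≤ N g := fun g =>
    Finset.sum_nonneg fun x _ => mul_nonneg (mul_nonneg (hμ x).1 (hτ x)) (hd0 g x)
  have hNS : ∀ g, N g ≤ S g := fun g =>
    Finset.sum_le_sum fun x _ => by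
      have := mul_nonneg (hτ x) (hd0 g x)
      calc μ x * τ x * d g x = μ x * (τ x * d g x) := by ring
        _ ≤ 1 * (τ x * d g x) := by
            exact mul_le_mul_of_nonneg_right (hμ x).2 this
        _ = τ x * d g x := one_mul _
  refine ⟨fun g => if S g = 0 then 0 else N g / S g, fun g => ?_, fun g g' _ _ => ?_⟩
  · by_cases h : S g = 0
    · simp [h]
    · have hSpos : 0 < S g := lt_of_le_of_ne (hS0 g) (Ne.symm h)
      simp only [h, if_false]
      constructor
      · exact div_nonneg (hN0 g) (hS0 g)
      · exact div_le_one_of_le₀ (hNS g) (hS0 g)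
  · have key : ∀ g, (if S g = 0 then (0:ℝ) else N g / S g) * S g = N g := by
      intro g
      by_cases h : S g = 0
      · have : N g = 0 := le_antisymm (h ▸ hNS g) (hN0 g)
        simp [h, this]
      · simp [h, div_mul_cancel₀ _ h]
    rw [key g, key g']
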